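/- Proposition 1, unfolding form. Fix k ∈ {1,…,N} and let X be the iFCTN contraction of cherry factors (G_{k,j})_{k≠j}. Let G_(k)ᵀ denote the matrix with rows indexed by multi-indices (r_j)_{j≠k} (r_j ∈ {1,…,R_{k,j}}) and columns indexed by i_k ∈ {1,…,I_k}, with entries G_(k)ᵀ((r_j)_{j≠k}, i_k) = ∏_{j≠k} G_{k,j}(r_j, i_k), and let Z_k be the matrix with entries Z_k((i_j)_{j≠k}, (r_j)_{j≠k}) = [∏_{p<q, p≠k, q≠k} (G_{p,q}ᵀ G_{q,p})_{i_p, i_q}] · ∏_{j≠k} G_{j,k}(r_j, i_j). Then the transposed mode-k unfolding of X factors as X_(k)ᵀ = Z_k · G_(k)ᵀ; that is, for all multi-indices (i_j)_{j≠k} and all i_k: X(i₁,…,i_N) = Σ over (r_j)_{j≠k} of Z_k((i_j)_{j≠k}, (r_j)_{j≠k}) · G_(k)ᵀ((r_j)_{j≠k}, i_k). -/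

import Mathlib

/-- The ordered pairs `(p, q)` with `p < q`. -/
abbrev iFCTNPairs (N : ℕ) : Type :=
  {pq : Fin N × Fin N // pq.1 < pq.2}

/-- The ordered pairs `(p, q)` with `p < q` that avoid the index `k`. -/
abbrev iFCTNPairsAvoiding (N : ℕ) (k : Fin N) : Type :=
  {pq : Fin N × Fin N // pq.1 < pq.2 ∧ pq.1 ≠ k ∧ pq.2 ≠ k}

def pairOf {N : ℕ} (k : Fin N) (j : {j : Fin N // j ≠ k}) : iFCTNPairs N :=
  if h : j.1 < k then ⟨(j.1, k), h⟩
  else ⟨(k, j.1), lt_of_le_of_ne (not_lt.mp h) (Ne.symm j.2)⟩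

def pairEquiv {N : ℕ} (k : Fin N) :
    (iFCTNPairsAvoiding N k ⊕ {j : Fin N // j ≠ k}) ≃ iFCTNPairs N where
  toFun x := Sum.elim (fun a => (⟨a.1, a.2.1⟩ : iFCTNPairs N)) (fun j => pairOf k j) x
  invFun pq :=
    if h1 : pq.1.1 = k then .inr ⟨pq.1.2, (show k < pq.1.2 from h1 ▸ pq.2).ne'⟩
    else if h2 : pq.1.2 = k then .inr ⟨pq.1.1, h1⟩
    else .inl ⟨pq.1, pq.2, h1, h2⟩
  left_inv := by
    rintro (⟨⟨p, q⟩, h, h1, h2⟩ | ⟨j, hj⟩)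
    · simp [h1, h2]
    · dsimp only [Sum.elim_inr]
      unfold pairOf
      split <;> simp [hj]
  right_inv := by
    rintro ⟨⟨p, q⟩, h⟩
    dsimp only
    by_cases h1 : p = k
    · subst h1
      rw [dif_pos rfl]
      dsimp only [Sum.elim_inr]
      unfold pairOf
      rw [dif_neg (not_lt.mpr h.le)]
    · by_cases h2 : q = k
      · subst h2
        rw [dif_neg h1, dif_pos rfl]
        dsimp only [Sum.elim_inr]
        unfold pairOf
        rw [dif_pos h]
      · rw [dif_neg h1, dif_neg h2]
        rfl

def hpair {N : ℕ} (R : Fin N → Fin N → ℕ+) (hR : ∀ p q : Fin N, R p q = R q p)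
    (k : Fin N) (j : {j : Fin N // j ≠ k}) :
    ((R k j.1 : ℕ+) : ℕ) = ((R (pairOf k j).1.1 (pairOf k j).1.2 : ℕ+) : ℕ) := by
  unfold pairOf; split
  · exact congrArg _ (hR k j.1)
  · rfl

def idxEquiv {N : ℕ} (R : Fin N → Fin N → ℕ+) (hR : ∀ p q : Fin N, R p q = R q p)
    (k : Fin N) :
    (((a : iFCTNPairsAvoiding N k) → Fin (R a.1.1 a.1.2)) ×
      ((j : {j : Fin N // j ≠ k}) → Fin (R k j.1))) ≃
      ((pq : iFCTNPairs N) → Fin (R pq.1.1 pq.1.2)) :=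
  ((Equiv.sumPiEquivProdPi
      (Sum.elim (fun a : iFCTNPairsAvoiding N k => Fin (R a.1.1 a.1.2))
        (fun j : {j : Fin N // j ≠ k} => Fin (R k j.1)))).symm).trans
    (Equiv.piCongr (pairEquiv k)
      (fun c => match c with
        | .inl _ => Equiv.refl _
        | .inr j => finCongr (hpair R hR k j)))

lemma idxEquiv_inl {N : ℕ} (R : Fin N → Fin N → ℕ+) (hR : ∀ p q : Fin N, R p q = R q p)
    (k : Fin N) (f : (a : iFCTNPairsAvoiding N k) → Fin (R a.1.1 a.1.2))
    (rr : (j : {j : Fin N // j ≠ k}) → Fin (R k j.1)) (a : iFCTNPairsAvoiding N k) :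
    idxEquiv R hR k (f, rr) (pairEquiv k (Sum.inl a)) = f a := by
  unfold idxEquiv
  exact (Equiv.piCongr_apply_apply (W := Sum.elim (fun a : iFCTNPairsAvoiding N k => Fin (R a.1.1 a.1.2))
      (fun j : {j : Fin N // j ≠ k} => Fin (R k j.1)))
    (Z := fun pq : iFCTNPairs N => Fin (R pq.1.1 pq.1.2)) (pairEquiv k)
    (fun c => match c with
      | .inl _ => Equiv.refl _
      | .inr j => finCongr (hpair R hR k j))
    ((Equiv.sumPiEquivProdPi _).symm (f, rr)) (Sum.inl a)).trans rfl

lemma idxEquiv_inr {N : ℕ} (R : Fin N → Fin N → ℕ+) (hR : ∀ p q : Fin N, R p q = R q p)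
    (k : Fin N) (f : (a : iFCTNPairsAvoiding N k) → Fin (R a.1.1 a.1.2))
    (rr : (j : {j : Fin N // j ≠ k}) → Fin (R k j.1)) (j : {j : Fin N // j ≠ k}) :
    idxEquiv R hR k (f, rr) (pairEquiv k (Sum.inr j)) =
      Fin.cast (hpair R hR k j) (rr j) := by
  unfold idxEquiv
  exact (Equiv.piCongr_apply_apply (W := Sum.elim (fun a : iFCTNPairsAvoiding N k => Fin (R a.1.1 a.1.2))
      (fun j : {j : Fin N // j ≠ k} => Fin (R k j.1)))
    (Z := fun pq : iFCTNPairs N => Fin (R pq.1.1 pq.1.2)) (pairEquiv k)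
    (fun c => match c with
      | .inl _ => Equiv.refl _
      | .inr j => finCongr (hpair R hR k j))
    ((Equiv.sumPiEquivProdPi _).symm (f, rr)) (Sum.inr j)).trans rfl

lemma factor_aux {N : ℕ} (I : Fin N → ℕ+) (R : Fin N → Fin N → ℕ+)
    (hR : ∀ p q : Fin N, R p q = R q p)
    (G : ∀ k j : Fin N, Matrix (Fin (R k j)) (Fin (I k)) ℝ)
    (i : (n : Fin N) → Fin (I n)) (k : Fin N)
    (pq : iFCTNPairs N) (j : Fin N)
    (hcase : pq.1 = (j, k) ∨ pq.1 = (k, j))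
    (h' : ((R k j : ℕ+) : ℕ) = ((R pq.1.1 pq.1.2 : ℕ+) : ℕ)) (s : Fin (R k j)) :
    G pq.1.1 pq.1.2 (Fin.cast h' s) (i pq.1.1) *
      G pq.1.2 pq.1.1
        (Fin.cast (congrArg (fun t : ℕ+ => (t : ℕ)) (hR pq.1.1 pq.1.2)) (Fin.cast h' s))
        (i pq.1.2) =
    G j k (Fin.cast (congrArg (fun t : ℕ+ => (t : ℕ)) (hR k j)) s) (i j) *
      G k j s (i k) := by
  obtain ⟨⟨p, q⟩, hlt⟩ := pq
  simp only [Prod.mk.injEq] at hcase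
  rcases hcase with ⟨rfl, rfl⟩ | ⟨rfl, rfl⟩
  · congr 1
  · rw [mul_comm]
    congr 1

/-- Proposition 1, unfolding form: the transposed mode-k unfolding of the iFCTN
contraction factors as X_(k)ᵀ = Z_k · G_(k)ᵀ, where Z_k is the mode-k cherry
sub-network and G_(k)ᵀ((r_j)_{j≠k}, i_k) = ∏_{j≠k} G_{k,j}(r_j, i_k). -/
theorem iFCTN_mode_k_unfolding
    (N : ℕ) (hN : 2 ≤ N)
    (I : Fin N → ℕ+) (R : Fin N → Fin N → ℕ+)
    (hR : ∀ p q : Fin N, R p q = R q p)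
    (G : ∀ k j : Fin N, Matrix (Fin (R k j)) (Fin (I k)) ℝ)
    (X : ((n : Fin N) → Fin (I n)) → ℝ)
    (hX : ∀ i : (n : Fin N) → Fin (I n),
      X i =
        ∑ r : (pq : iFCTNPairs N) → Fin (R pq.1.1 pq.1.2),
          ∏ pq : iFCTNPairs N,
            G pq.1.1 pq.1.2 (r pq) (i pq.1.1) *
            G pq.1.2 pq.1.1
              (Fin.cast (congrArg (fun t : ℕ+ => (t : ℕ)) (hR pq.1.1 pq.1.2)) (r pq))
              (i pq.1.2))
    (k : Fin N) :
    ∀ i : (n : Fin N) → Fin (I n),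
      X i =
        ∑ rr : (j : {j : Fin N // j ≠ k}) → Fin (R k j.1),
          ((∏ pq : iFCTNPairsAvoiding N k,
            ∑ t : Fin (R pq.1.1 pq.1.2),
              G pq.1.1 pq.1.2 t (i pq.1.1) *
              G pq.1.2 pq.1.1
                (Fin.cast (congrArg (fun t : ℕ+ => (t : ℕ)) (hR pq.1.1 pq.1.2)) t)
                (i pq.1.2)) *
          ∏ j : {j : Fin N // j ≠ k},
            G j.1 k (Fin.cast (congrArg (fun t : ℕ+ => (t : ℕ)) (hR k j.1)) (rr j)) (i j.1)) *
          ∏ j : {j : Fin N // j ≠ k},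
            G k j.1 (rr j) (i k) := by
  intro i
  rw [hX i]
  rw [← Equiv.sum_comp (idxEquiv R hR k)
    (fun r : (pq : iFCTNPairs N) → Fin (R pq.1.1 pq.1.2) =>
      ∏ pq : iFCTNPairs N,
        G pq.1.1 pq.1.2 (r pq) (i pq.1.1) *
        G pq.1.2 pq.1.1
          (Fin.cast (congrArg (fun t : ℕ+ => (t : ℕ)) (hR pq.1.1 pq.1.2)) (r pq))
          (i pq.1.2))]
  rw [Fintype.sum_prod_type, Finset.sum_comm]
  refine Finset.sum_congr rfl fun rr _ => ?_
  rw [Fintype.prod_sum, Finset.sum_mul, Finset.sum_mul]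
  refine Finset.sum_congr rfl fun f _ => ?_
  rw [← Equiv.prod_comp (pairEquiv k)
    (fun pq : iFCTNPairs N =>
      G pq.1.1 pq.1.2 (idxEquiv R hR k (f, rr) pq) (i pq.1.1) *
      G pq.1.2 pq.1.1
        (Fin.cast (congrArg (fun t : ℕ+ => (t : ℕ)) (hR pq.1.1 pq.1.2))
          (idxEquiv R hR k (f, rr) pq))
        (i pq.1.2)),
    Fintype.prod_sum_type]
  conv_rhs => rw [mul_assoc, ← Finset.prod_mul_distrib]
  congr 1
  · refine Finset.prod_congr rfl fun a _ => ?_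
    rw [idxEquiv_inl]
    rfl
  · refine Finset.prod_congr rfl fun j _ => ?_
    rw [idxEquiv_inr]
    refine factor_aux I R hR G i k (pairEquiv k (Sum.inr j)) j.1 ?_ _ (rr j)
    show (pairOf k j).1 = _ ∨ (pairOf k j).1 = _
    unfold pairOf
    split
    · exact Or.inl rfl
    · exact Or.inr rfl
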